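/- arXiv:2106.05530 — 2 statements merged into one kernel-verified Lean document; each statement's English description precedes it below -/
import Mathlib

section
/- Let D = { ρ : S×A → ℝ | ρ ≥ 0 and ∑_a ρ(s,a) = μ₀(s) + γ·∑_{s',a'} ρ(s',a')·P(s|s',a') for all s }. Then the map sending a stationary policy π to its discounted occupancy measure ρ_π is a bijection from the set of stationary policies (with π(a|s) well-defined whenever ∑_a ρ(s,a) > 0) onto D, with inverse given by π(a|s) = ρ(s,a) / ∑_{a'} ρ(s,a'). -/
open Finset

noncomputable def stepDist {S A : Type*} [Fintype S] [Fintype A]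
    (μ0 : S → ℝ) (P : S → A → S → ℝ) (π : S → A → ℝ) : ℕ → S × A → ℝ
  | 0 => fun sa => μ0 sa.1 * π sa.1 sa.2
  | (t + 1) => fun sa =>
      π sa.1 sa.2 * ∑ sa' : S × A, stepDist μ0 P π t sa' * P sa'.1 sa'.2 sa.1

noncomputable def occMeasure {S A : Type*} [Fintype S] [Fintype A]
    (μ0 : S → ℝ) (P : S → A → S → ℝ) (π : S → A → ℝ) (γ : ℝ) (sa : S × A) : ℝ :=
  ∑' t : ℕ, γ ^ t * stepDist μ0 P π t sa

section Aux
variable {S A : Type*} [Fintype S] [Fintype A]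
variable {μ0 : S → ℝ} {P : S → A → S → ℝ} {π : S → A → ℝ} {γ : ℝ}

lemma stepDist_zero (sa : S × A) : stepDist μ0 P π 0 sa = μ0 sa.1 * π sa.1 sa.2 := rfl

lemma stepDist_succ (t : ℕ) (sa : S × A) :
    stepDist μ0 P π (t + 1) sa
      = π sa.1 sa.2 * ∑ sa' : S × A, stepDist μ0 P π t sa' * P sa'.1 sa'.2 sa.1 := rfl

lemma stepDist_nonneg (hμ : ∀ s, 0 ≤ μ0 s) (hP0 : ∀ s a s', 0 ≤ P s a s')
    (hπ0 : ∀ s a, 0 ≤ π s a) : ∀ t sa, 0 ≤ stepDist μ0 P π t sa := by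
  intro t
  induction t with
  | zero => exact fun sa => mul_nonneg (hμ _) (hπ0 _ _)
  | succ t ih =>
    exact fun sa => mul_nonneg (hπ0 _ _)
      (Finset.sum_nonneg fun sa' _ => mul_nonneg (ih sa') (hP0 _ _ _))

lemma sum_stepDist_zero (hπ1 : ∀ s, ∑ a, π s a = 1) (s : S) :
    ∑ a, stepDist μ0 P π 0 (s, a) = μ0 s := by
  simp only [stepDist_zero]
  rw [← Finset.mul_sum, hπ1, mul_one]

lemma sum_stepDist_succ (hπ1 : ∀ s, ∑ a, π s a = 1) (t : ℕ) (s : S) :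
    ∑ a, stepDist μ0 P π (t + 1) (s, a)
      = ∑ sa' : S × A, stepDist μ0 P π t sa' * P sa'.1 sa'.2 s := by
  simp only [stepDist_succ]
  rw [← Finset.sum_mul, hπ1, one_mul]

lemma stepDist_factor (hπ1 : ∀ s, ∑ a, π s a = 1) (t : ℕ) (sa : S × A) :
    stepDist μ0 P π t sa = π sa.1 sa.2 * ∑ a, stepDist μ0 P π t (sa.1, a) := by
  cases t with
  | zero => rw [sum_stepDist_zero hπ1, stepDist_zero, mul_comm]
  | succ t => rw [sum_stepDist_succ hπ1, stepDist_succ]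

lemma stepDist_total (hμ1 : ∑ s, μ0 s = 1) (hP1 : ∀ s a, ∑ s', P s a s' = 1)
    (hπ1 : ∀ s, ∑ a, π s a = 1) (t : ℕ) :
    ∑ sa : S × A, stepDist μ0 P π t sa = 1 := by
  induction t with
  | zero =>
    rw [Fintype.sum_prod_type]
    simp_rw [sum_stepDist_zero hπ1]
    exact hμ1
  | succ t ih =>
    rw [Fintype.sum_prod_type]
    simp_rw [sum_stepDist_succ hπ1]
    rw [Finset.sum_comm]
    simp_rw [← Finset.mul_sum, hP1, mul_one]
    exact ih

lemma stepDist_le_one (hμ : ∀ s, 0 ≤ μ0 s) (hμ1 : ∑ s, μ0 s = 1)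
    (hP0 : ∀ s a s', 0 ≤ P s a s') (hP1 : ∀ s a, ∑ s', P s a s' = 1)
    (hπ0 : ∀ s a, 0 ≤ π s a) (hπ1 : ∀ s, ∑ a, π s a = 1) (t : ℕ) (sa : S × A) :
    stepDist μ0 P π t sa ≤ 1 := by
  rw [← stepDist_total hμ1 hP1 hπ1 t]
  exact Finset.single_le_sum (fun sa' _ => stepDist_nonneg hμ hP0 hπ0 t sa') (Finset.mem_univ sa)


section Hyp
variable (hγ0 : 0 ≤ γ) (hγ1 : γ < 1)
variable (hμ : ∀ s, 0 < μ0 s) (hμ1 : ∑ s, μ0 s = 1)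
variable (hP0 : ∀ s a s', 0 ≤ P s a s') (hP1 : ∀ s a, ∑ s', P s a s' = 1)
variable (hπ0 : ∀ s a, 0 ≤ π s a) (hπ1 : ∀ s, ∑ a, π s a = 1)
include hγ0 hγ1 hμ hμ1 hP0 hP1 hπ0 hπ1

lemma summable_occ (sa : S × A) :
    Summable (fun t => γ ^ t * stepDist μ0 P π t sa) := by
  refine Summable.of_nonneg_of_le
    (fun t => mul_nonneg (pow_nonneg hγ0 t) (stepDist_nonneg (fun s => (hμ s).le) hP0 hπ0 t sa))
    (fun t => ?_) (summable_geometric_of_lt_one hγ0 hγ1)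
  calc γ ^ t * stepDist μ0 P π t sa ≤ γ ^ t * 1 :=
        mul_le_mul_of_nonneg_left
          (stepDist_le_one (fun s => (hμ s).le) hμ1 hP0 hP1 hπ0 hπ1 t sa) (pow_nonneg hγ0 t)
    _ = γ ^ t := mul_one _

lemma summable_nu (s : S) :
    Summable (fun t => γ ^ t * ∑ a, stepDist μ0 P π t (s, a)) := by
  have : Summable (fun t => ∑ a, γ ^ t * stepDist μ0 P π t (s, a)) :=
    summable_sum fun a _ => summable_occ hγ0 hγ1 hμ hμ1 hP0 hP1 hπ0 hπ1 (s, a)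
  simpa [Finset.mul_sum] using this

lemma occ_nonneg (sa : S × A) : 0 ≤ occMeasure μ0 P π γ sa :=
  tsum_nonneg fun t =>
    mul_nonneg (pow_nonneg hγ0 t) (stepDist_nonneg (fun s => (hμ s).le) hP0 hπ0 t sa)

lemma sum_occ (s : S) :
    ∑ a, occMeasure μ0 P π γ (s, a)
      = ∑' t : ℕ, γ ^ t * ∑ a, stepDist μ0 P π t (s, a) := by
  unfold occMeasure
  rw [← Summable.tsum_finsetSum (fun a _ => summable_occ hγ0 hγ1 hμ hμ1 hP0 hP1 hπ0 hπ1 (s, a))]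
  simp_rw [← Finset.mul_sum]

lemma occ_factor (sa : S × A) :
    occMeasure μ0 P π γ sa = π sa.1 sa.2 * ∑ a, occMeasure μ0 P π γ (sa.1, a) := by
  rw [sum_occ hγ0 hγ1 hμ hμ1 hP0 hP1 hπ0 hπ1, ← tsum_mul_left]
  unfold occMeasure
  congr 1
  funext t
  rw [stepDist_factor hπ1 t sa]
  ring

lemma le_sum_occ (s : S) : μ0 s ≤ ∑ a, occMeasure μ0 P π γ (s, a) := by
  rw [sum_occ hγ0 hγ1 hμ hμ1 hP0 hP1 hπ0 hπ1]
  have h := Summable.le_tsum (summable_nu hγ0 hγ1 hμ hμ1 hP0 hP1 hπ0 hπ1 s) 0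
    (fun j _ => mul_nonneg (pow_nonneg hγ0 j)
      (Finset.sum_nonneg fun a _ => stepDist_nonneg (fun s => (hμ s).le) hP0 hπ0 j (s, a)))
  simpa [sum_stepDist_zero hπ1] using h

lemma occ_bellman (s : S) :
    ∑ a, occMeasure μ0 P π γ (s, a)
      = μ0 s + γ * ∑ sa' : S × A, occMeasure μ0 P π γ sa' * P sa'.1 sa'.2 s := by
  have hsw : ∑ sa' : S × A, occMeasure μ0 P π γ sa' * P sa'.1 sa'.2 s
      = ∑' t : ℕ, ∑ sa' : S × A, γ ^ t * stepDist μ0 P π t sa' * P sa'.1 sa'.2 s := by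
    unfold occMeasure
    simp_rw [← tsum_mul_right]
    rw [Summable.tsum_finsetSum (fun sa' _ =>
      (summable_occ hγ0 hγ1 hμ hμ1 hP0 hP1 hπ0 hπ1 sa').mul_right _)]
  rw [sum_occ hγ0 hγ1 hμ hμ1 hP0 hP1 hπ0 hπ1,
    Summable.tsum_eq_zero_add (summable_nu hγ0 hγ1 hμ hμ1 hP0 hP1 hπ0 hπ1 s), hsw, ← tsum_mul_left]
  congr 1
  · simp [sum_stepDist_zero hπ1]
  · refine tsum_congr fun t => ?_
    rw [sum_stepDist_succ hπ1, Finset.mul_sum, Finset.mul_sum]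
    refine Finset.sum_congr rfl fun sa' _ => ?_
    ring

end Hyp
end Aux

lemma contraction_zero {S : Type*} [Fintype S] {γ : ℝ} (hγ0 : 0 ≤ γ) (hγ1 : γ < 1)
    (q : S → S → ℝ) (hq0 : ∀ s' s, 0 ≤ q s' s) (hq1 : ∀ s', ∑ s, q s' s = 1)
    (f : S → ℝ) (hf : ∀ s, f s = γ * ∑ s', f s' * q s' s) : ∀ s, f s = 0 := by
  have key : ∑ s, |f s| ≤ γ * ∑ s, |f s| := by
    calc ∑ s, |f s| ≤ ∑ s, γ * ∑ s', |f s'| * q s' s := by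
          refine Finset.sum_le_sum fun s _ => ?_
          rw [hf s, abs_mul, abs_of_nonneg hγ0]
          refine mul_le_mul_of_nonneg_left ?_ hγ0
          calc |∑ s', f s' * q s' s| ≤ ∑ s', |f s' * q s' s| := Finset.abs_sum_le_sum_abs _ _
            _ = ∑ s', |f s'| * q s' s := by
                refine Finset.sum_congr rfl fun s' _ => ?_
                rw [abs_mul, abs_of_nonneg (hq0 s' s)]
      _ = γ * ∑ s, |f s| := by
          rw [← Finset.mul_sum]
          congr 1
          rw [Finset.sum_comm]
          simp_rw [← Finset.mul_sum, hq1, mul_one]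
  have h0 : 0 ≤ ∑ s, |f s| := Finset.sum_nonneg fun s _ => abs_nonneg _
  have hz : ∑ s, |f s| = 0 := by nlinarith
  intro s
  exact abs_eq_zero.mp
    ((Finset.sum_eq_zero_iff_of_nonneg (fun s _ => abs_nonneg (f s))).mp hz s (Finset.mem_univ s))

lemma occ_of_flow {S A : Type*} [Fintype S] [Fintype A]
    (μ0 : S → ℝ) (P : S → A → S → ℝ) (γ : ℝ)
    (hγ0 : 0 ≤ γ) (hγ1 : γ < 1)
    (hμ : ∀ s, 0 < μ0 s) (hμ1 : ∑ s, μ0 s = 1)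
    (hP0 : ∀ s a s', 0 ≤ P s a s') (hP1 : ∀ s a, ∑ s', P s a s' = 1)
    (ρ : S × A → ℝ) (hρ0 : ∀ sa, 0 ≤ ρ sa)
    (hρf : ∀ s, ∑ a, ρ (s, a) = μ0 s + γ * ∑ sa' : S × A, ρ sa' * P sa'.1 sa'.2 s) :
    occMeasure μ0 P (fun s a => ρ (s, a) / ∑ a', ρ (s, a')) γ = ρ := by
  set π : S → A → ℝ := fun s a => ρ (s, a) / ∑ a', ρ (s, a') with hπdef
  set ρs : S → ℝ := fun s => ∑ a, ρ (s, a) with hρsdef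
  have hρspos : ∀ s, 0 < ρs s := by
    intro s
    have h1 : 0 ≤ γ * ∑ sa' : S × A, ρ sa' * P sa'.1 sa'.2 s :=
      mul_nonneg hγ0 (Finset.sum_nonneg fun sa' _ => mul_nonneg (hρ0 _) (hP0 _ _ _))
    have h2 : ρs s = μ0 s + γ * ∑ sa' : S × A, ρ sa' * P sa'.1 sa'.2 s := hρf s
    have := hμ s
    linarith
  have hπ0 : ∀ s a, 0 ≤ π s a := fun s a => div_nonneg (hρ0 _) (hρspos s).le
  have hπ1 : ∀ s, ∑ a, π s a = 1 := by
    intro s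
    simp only [hπdef]
    rw [← Finset.sum_div, div_self (hρspos s).ne']
  have hfac : ∀ sa : S × A, ρ sa = π sa.1 sa.2 * ρs sa.1 := by
    rintro ⟨s, a⟩
    simp only [hπdef, hρsdef]
    rw [div_mul_cancel₀ _ (hρspos s).ne']
  set q : S → S → ℝ := fun s' s => ∑ a', π s' a' * P s' a' s with hqdef
  have hq0 : ∀ s' s, 0 ≤ q s' s := fun s' s =>
    Finset.sum_nonneg fun a' _ => mul_nonneg (hπ0 _ _) (hP0 _ _ _)
  have hq1 : ∀ s', ∑ s, q s' s = 1 := by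
    intro s'
    simp only [hqdef]
    rw [Finset.sum_comm]
    simp_rw [← Finset.mul_sum, hP1, mul_one]
    exact hπ1 s'
  set d : S → ℝ := fun s => ∑ a, occMeasure μ0 P π γ (s, a) with hddef
  have hofac : ∀ sa : S × A, occMeasure μ0 P π γ sa = π sa.1 sa.2 * d sa.1 :=
    fun sa => occ_factor hγ0 hγ1 hμ hμ1 hP0 hP1 hπ0 hπ1 sa
  have hdb : ∀ s, d s = μ0 s + γ * ∑ s', d s' * q s' s := by
    intro s
    have hb := occ_bellman hγ0 hγ1 hμ hμ1 hP0 hP1 hπ0 hπ1 (μ0 := μ0) (P := P) (π := π) s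
    rw [hddef]
    simp only
    rw [hb]
    congr 2
    rw [Fintype.sum_prod_type]
    refine Finset.sum_congr rfl fun s' _ => ?_
    simp only [hqdef]
    rw [Finset.mul_sum]
    refine Finset.sum_congr rfl fun a' _ => ?_
    rw [hofac (s', a')]
    ring
  have hρb : ∀ s, ρs s = μ0 s + γ * ∑ s', ρs s' * q s' s := by
    intro s
    have := hρf s
    rw [hρsdef]
    simp only
    rw [this]
    congr 2
    rw [Fintype.sum_prod_type]
    refine Finset.sum_congr rfl fun s' _ => ?_
    simp only [hqdef]
    rw [Finset.mul_sum]
    refine Finset.sum_congr rfl fun a' _ => ?_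
    rw [hfac (s', a')]
    ring
  have hde : ∀ s, d s = ρs s := by
    have hz := contraction_zero hγ0 hγ1 q hq0 hq1 (fun s => d s - ρs s) (fun s => by
      rw [hdb s, hρb s]
      simp_rw [sub_mul]
      rw [Finset.sum_sub_distrib, mul_sub]
      ring)
    intro s
    have := hz s
    linarith
  funext sa
  rw [hofac sa, hde sa.1, ← hfac sa]

/-- The map sending a stationary policy to its discounted occupancy measure is a
bijection from the set of stationary policies onto the Bellman flow polytope `D`,
with inverse given by conditioning: `π(a|s) = ρ(s,a) / ∑_{a'} ρ(s,a')`. -/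
theorem occupancy_bijection
    {S A : Type*} [Fintype S] [Fintype A]
    (μ0 : S → ℝ) (P : S → A → S → ℝ) (γ : ℝ)
    (hγ0 : 0 ≤ γ) (hγ1 : γ < 1)
    (hμ0 : ∀ s, 0 < μ0 s) (hμ1 : ∑ s, μ0 s = 1)
    (hP0 : ∀ s a s', 0 ≤ P s a s') (hP1 : ∀ s a, ∑ s', P s a s' = 1) :
    Set.BijOn (fun π => occMeasure μ0 P π γ)
      {π : S → A → ℝ | (∀ s a, 0 ≤ π s a) ∧ ∀ s, ∑ a, π s a = 1}
      {ρ : S × A → ℝ | (∀ sa, 0 ≤ ρ sa) ∧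
        ∀ s, ∑ a, ρ (s, a) = μ0 s + γ * ∑ sa' : S × A, ρ sa' * P sa'.1 sa'.2 s} ∧
    ∀ ρ : S × A → ℝ,
      ((∀ sa, 0 ≤ ρ sa) ∧
        ∀ s, ∑ a, ρ (s, a) = μ0 s + γ * ∑ sa' : S × A, ρ sa' * P sa'.1 sa'.2 s) →
      occMeasure μ0 P (fun s a => ρ (s, a) / ∑ a', ρ (s, a')) γ = ρ := by
  have hinv : ∀ ρ : S × A → ℝ,
      ((∀ sa, 0 ≤ ρ sa) ∧
        ∀ s, ∑ a, ρ (s, a) = μ0 s + γ * ∑ sa' : S × A, ρ sa' * P sa'.1 sa'.2 s) →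
      occMeasure μ0 P (fun s a => ρ (s, a) / ∑ a', ρ (s, a')) γ = ρ :=
    fun ρ h => occ_of_flow μ0 P γ hγ0 hγ1 hμ0 hμ1 hP0 hP1 ρ h.1 h.2
  refine ⟨⟨?_, ?_, ?_⟩, hinv⟩
  · -- MapsTo
    rintro π ⟨hπ0, hπ1⟩
    exact ⟨fun sa => occ_nonneg hγ0 hγ1 hμ0 hμ1 hP0 hP1 hπ0 hπ1 sa,
      fun s => occ_bellman hγ0 hγ1 hμ0 hμ1 hP0 hP1 hπ0 hπ1 s⟩
  · -- InjOn
    rintro π ⟨hπ0, hπ1⟩ π' ⟨hπ0', hπ1'⟩ h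
    simp only at h
    funext s a
    have hd : ∑ a, occMeasure μ0 P π γ (s, a) = ∑ a, occMeasure μ0 P π' γ (s, a) := by rw [h]
    have hdpos : 0 < ∑ a, occMeasure μ0 P π γ (s, a) :=
      lt_of_lt_of_le (hμ0 s) (le_sum_occ hγ0 hγ1 hμ0 hμ1 hP0 hP1 hπ0 hπ1 s)
    have h1 := occ_factor hγ0 hγ1 hμ0 hμ1 hP0 hP1 hπ0 hπ1 (μ0 := μ0) (P := P) (s, a)
    have h2 := occ_factor hγ0 hγ1 hμ0 hμ1 hP0 hP1 hπ0' hπ1' (μ0 := μ0) (P := P) (s, a)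
    have hkey : π s a * (∑ a, occMeasure μ0 P π γ (s, a))
        = π' s a * (∑ a, occMeasure μ0 P π γ (s, a)) := by
      rw [← h1, hd, ← h2, h]
    exact mul_right_cancel₀ hdpos.ne' hkey
  · -- SurjOn
    rintro ρ ⟨hρ0, hρf⟩
    have hρspos : ∀ s, 0 < ∑ a, ρ (s, a) := by
      intro s
      have hnn : 0 ≤ γ * ∑ sa' : S × A, ρ sa' * P sa'.1 sa'.2 s :=
        mul_nonneg hγ0 (Finset.sum_nonneg fun sa' _ => mul_nonneg (hρ0 _) (hP0 _ _ _))
      have := hμ0 s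
      have := hρf s
      linarith
    refine ⟨fun s a => ρ (s, a) / ∑ a', ρ (s, a'), ⟨fun s a => div_nonneg (hρ0 _) (hρspos s).le,
      fun s => by rw [← Finset.sum_div, div_self (hρspos s).ne']⟩, hinv ρ ⟨hρ0, hρf⟩⟩
end

section
/- Let ρ ∈ D (the Bellman flow polytope) and define π(a|s) = ρ(s,a)/∑_{a'} ρ(s,a') whenever ∑_{a'} ρ(s,a') > 0. Then ρ is the occupancy measure of π: ρ = ρ_π. -/
open Finset

/-- state marginal recursion -/
noncomputable def nuAux {S A : Type*} [Fintype S] [Fintype A]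
    (P : S → A → S → ℝ) (π : S → A → ℝ) (f : S → ℝ) : ℕ → S → ℝ
  | 0 => f
  | (t + 1) => fun s => ∑ sa' : S × A, π sa'.1 sa'.2 * nuAux P π f t sa'.1 * P sa'.1 sa'.2 s

lemma stepDist_eq_nuAux {S A : Type*} [Fintype S] [Fintype A]
    (μ0 : S → ℝ) (P : S → A → S → ℝ) (π : S → A → ℝ) :
    ∀ t sa, stepDist μ0 P π t sa = π sa.1 sa.2 * nuAux P π μ0 t sa.1 := by
  intro t
  induction t with
  | zero => intro sa; simp [stepDist, nuAux, mul_comm]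
  | succ t ih =>
    intro sa
    simp only [stepDist, nuAux]
    congr 1
    apply Finset.sum_congr rfl
    intro sa' _
    rw [ih sa']

lemma nuAux_nonneg {S A : Type*} [Fintype S] [Fintype A]
    (P : S → A → S → ℝ) (π : S → A → ℝ) (f : S → ℝ)
    (hP0 : ∀ s a s', 0 ≤ P s a s') (hπ0 : ∀ s a, 0 ≤ π s a) (hf : ∀ s, 0 ≤ f s) :
    ∀ t s, 0 ≤ nuAux P π f t s := by
  intro t
  induction t with
  | zero => exact hf
  | succ t ih =>
    intro s
    apply Finset.sum_nonneg
    intro sa' _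
    exact mul_nonneg (mul_nonneg (hπ0 _ _) (ih _)) (hP0 _ _ _)

lemma nuAux_mass {S A : Type*} [Fintype S] [Fintype A]
    (P : S → A → S → ℝ) (π : S → A → ℝ) (f : S → ℝ)
    (hP1 : ∀ s a, ∑ s', P s a s' = 1) (hπ1 : ∀ s, ∑ a, π s a = 1) :
    ∀ t, ∑ s, nuAux P π f t s = ∑ s, f s := by
  intro t
  induction t with
  | zero => rfl
  | succ t ih =>
    have : ∑ s, nuAux P π f (t + 1) s
        = ∑ sa' : S × A, π sa'.1 sa'.2 * nuAux P π f t sa'.1 := by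
      simp only [nuAux]
      rw [Finset.sum_comm]
      apply Finset.sum_congr rfl
      intro sa' _
      rw [← Finset.mul_sum, hP1, mul_one]
    rw [this, ← ih, Fintype.sum_prod_type]
    apply Finset.sum_congr rfl
    intro s _
    have h2 : ∀ y : A, π (s, y).1 (s, y).2 * nuAux P π f t (s, y).1
        = π s y * nuAux P π f t s := fun y => rfl
    rw [Finset.sum_congr rfl (fun y _ => h2 y), ← Finset.sum_mul, hπ1, one_mul]

/-- If `ρ` lies in the Bellman flow polytope `D` and `π` is the policy obtained by
conditioning, `π(a|s) = ρ(s,a)/∑_{a'} ρ(s,a')`, then `ρ` is the occupancy measure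
of `π`. -/
theorem flow_polytope_is_occupancy
    {S A : Type*} [Fintype S] [Fintype A]
    (μ0 : S → ℝ) (P : S → A → S → ℝ) (γ : ℝ)
    (hγ0 : 0 ≤ γ) (hγ1 : γ < 1)
    (hμ0 : ∀ s, 0 < μ0 s) (hμ1 : ∑ s, μ0 s = 1)
    (hP0 : ∀ s a s', 0 ≤ P s a s') (hP1 : ∀ s a, ∑ s', P s a s' = 1)
    (ρ : S × A → ℝ) (hρ0 : ∀ sa, 0 ≤ ρ sa)
    (hflow : ∀ s, ∑ a, ρ (s, a)
        = μ0 s + γ * ∑ sa' : S × A, ρ sa' * P sa'.1 sa'.2 s) :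
    occMeasure μ0 P (fun s a => ρ (s, a) / ∑ a', ρ (s, a')) γ = ρ := by
  set m : S → ℝ := fun s => ∑ a, ρ (s, a) with hm
  set π : S → A → ℝ := fun s a => ρ (s, a) / m s with hπ
  -- m is positive
  have hmpos : ∀ s, 0 < m s := by
    intro s
    have h2 : 0 ≤ γ * ∑ sa' : S × A, ρ sa' * P sa'.1 sa'.2 s := by
      apply mul_nonneg hγ0
      apply Finset.sum_nonneg
      intro sa' _
      exact mul_nonneg (hρ0 _) (hP0 _ _ _)
    have := hflow s
    rw [hm]; dsimp only; rw [this]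
    linarith [hμ0 s]
  have hπρ : ∀ s a, π s a * m s = ρ (s, a) := by
    intro s a
    rw [hπ]; dsimp only
    exact div_mul_cancel₀ _ (hmpos s).ne'
  have hπ0 : ∀ s a, 0 ≤ π s a := fun s a =>
    div_nonneg (hρ0 _) (hmpos s).le
  have hπ1 : ∀ s, ∑ a, π s a = 1 := by
    intro s
    rw [hπ]; dsimp only
    rw [← Finset.sum_div]
    exact div_self (hmpos s).ne'
  -- the recursion relation: nuAux m t = nuAux μ0 t + γ * nuAux m (t+1)
  have hrec : ∀ t s, nuAux P π m t s = nuAux P π μ0 t s + γ * nuAux P π m (t + 1) s := by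
    intro t
    induction t with
    | zero =>
      intro s
      show m s = μ0 s + γ * nuAux P π m 1 s
      have : nuAux P π m 1 s = ∑ sa' : S × A, ρ sa' * P sa'.1 sa'.2 s := by
        show (∑ sa' : S × A, π sa'.1 sa'.2 * nuAux P π m 0 sa'.1 * P sa'.1 sa'.2 s) = _
        apply Finset.sum_congr rfl
        intro sa' _
        show π sa'.1 sa'.2 * m sa'.1 * P sa'.1 sa'.2 s = _
        rw [hπρ]
      rw [this]
      exact hflow s
    | succ t ih =>
      intro s
      show (∑ sa' : S × A, π sa'.1 sa'.2 * nuAux P π m t sa'.1 * P sa'.1 sa'.2 s) = _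
      have : ∀ sa' : S × A, π sa'.1 sa'.2 * nuAux P π m t sa'.1 * P sa'.1 sa'.2 s
          = π sa'.1 sa'.2 * nuAux P π μ0 t sa'.1 * P sa'.1 sa'.2 s
            + γ * (π sa'.1 sa'.2 * nuAux P π m (t + 1) sa'.1 * P sa'.1 sa'.2 s) := by
        intro sa'
        rw [ih sa'.1]
        ring
      rw [Finset.sum_congr rfl (fun sa' _ => this sa'), Finset.sum_add_distrib,
        ← Finset.mul_sum]
      rfl
  -- unfolding n steps
  have hunfold : ∀ n s, m s = (∑ t ∈ Finset.range n, γ ^ t * nuAux P π μ0 t s)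
      + γ ^ n * nuAux P π m n s := by
    intro n
    induction n with
    | zero => intro s; simp [nuAux]
    | succ n ih =>
      intro s
      rw [ih s, Finset.sum_range_succ, hrec n s]
      ring
  -- bounds on nuAux m
  have hmass : ∀ t, ∑ s, nuAux P π m t s = ∑ s, m s := nuAux_mass P π m hP1 hπ1
  have hnn : ∀ t s, 0 ≤ nuAux P π m t s :=
    nuAux_nonneg P π m hP0 hπ0 (fun s => (hmpos s).le)
  have hbound : ∀ t s, nuAux P π m t s ≤ ∑ s, m s := by
    intro t s
    rw [← hmass t]
    exact Finset.single_le_sum (fun s' _ => hnn t s') (Finset.mem_univ s)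
  -- partial sums converge to m s
  have hhas : ∀ s, HasSum (fun t => γ ^ t * nuAux P π μ0 t s) (m s) := by
    intro s
    have hnn0 : ∀ t, 0 ≤ γ ^ t * nuAux P π μ0 t s := fun t =>
      mul_nonneg (pow_nonneg hγ0 t) (nuAux_nonneg P π μ0 hP0 hπ0 (fun s => (hμ0 s).le) t s)
    rw [hasSum_iff_tendsto_nat_of_nonneg hnn0]
    have htail : Filter.Tendsto (fun n => γ ^ n * nuAux P π m n s) Filter.atTop (nhds 0) := by
      have h1 : Filter.Tendsto (fun n : ℕ => γ ^ n * ∑ s, m s) Filter.atTop (nhds 0) := by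
        have := (tendsto_pow_atTop_nhds_zero_of_lt_one hγ0 hγ1).mul_const (∑ s, m s)
        simpa using this
      apply squeeze_zero (fun n => mul_nonneg (pow_nonneg hγ0 n) (hnn n s))
        (fun n => mul_le_mul_of_nonneg_left (hbound n s) (pow_nonneg hγ0 n)) h1
    have : (fun n => ∑ t ∈ Finset.range n, γ ^ t * nuAux P π μ0 t s)
        = fun n => m s - γ ^ n * nuAux P π m n s := by
      funext n
      rw [hunfold n s]; ring
    rw [this]
    have := Filter.Tendsto.sub (tendsto_const_nhds (x := m s)) htail
    simpa using this
  -- conclude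
  funext sa
  obtain ⟨s, a⟩ := sa
  show occMeasure μ0 P π γ (s, a) = ρ (s, a)
  unfold occMeasure
  have heq : ∀ t : ℕ, γ ^ t * stepDist μ0 P π t (s, a)
      = π s a * (γ ^ t * nuAux P π μ0 t s) := by
    intro t
    rw [stepDist_eq_nuAux]
    ring
  rw [tsum_congr heq, tsum_mul_left, ((hhas s).tsum_eq : _), hπρ]
end
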